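/- Suppose f is analytic on a neighborhood of the closed Bernstein ellipse E_χ (foci ±1, sum of half-axes χ > 1), real valued on the reals, with M(χ) = sup_{z ∈ E_χ} |f(z)|. Then for every k, the best uniform polynomial approximation error on [-1,1] satisfies E_k(f) ≤ 2 M(χ) / (χ^k (χ - 1)). -/

import Mathlib

open Complex Set

/-- The closed Bernstein ellipse with foci `±1` and sum of half-axes `χ`:
half-axes `a = (χ²+1)/(2χ)` and `b = (χ²-1)/(2χ)`. -/
def bernsteinEllipse (χ : ℝ) : Set ℂ :=
  {z : ℂ | z.re ^ 2 / ((χ ^ 2 + 1) / (2 * χ)) ^ 2 +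
      z.im ^ 2 / ((χ ^ 2 - 1) / (2 * χ)) ^ 2 ≤ 1}

open Real

lemma toCircle_eq (t : ℝ) :
    (AddCircle.toCircle (t : AddCircle (2 * π)) : ℂ) = Complex.exp (t * I) := by
  rw [AddCircle.toCircle_apply_mk,
    show 2 * π / (2 * π) = 1 from div_self (by positivity), one_mul, Circle.coe_exp]

lemma fourier_eq (m : ℤ) (t : ℝ) :
    (fourier m (t : AddCircle (2 * π)) : ℂ) = Complex.exp (t * I) ^ m := by
  rw [fourier_coe_apply, ← Complex.exp_int_mul]
  congr 1
  have hπ : (π : ℂ) ≠ 0 := Complex.ofReal_ne_zero.mpr Real.pi_ne_zero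
  push_cast
  field_simp

lemma mem_bernstein {χ r : ℝ} (θ : ℝ) (hχ : 1 < χ) (h1 : 1 ≤ r) (h2 : r ≤ χ) :
    ((r : ℂ) * Complex.exp (θ * I) + ((r : ℂ) * Complex.exp (θ * I))⁻¹) / 2 ∈ bernsteinEllipse χ := by
  have hr0 : 0 < r := lt_of_lt_of_le one_pos h1
  have hχ0 : 0 < χ := lt_trans one_pos hχ
  have hz : ((r : ℂ) * Complex.exp (θ * I) + ((r : ℂ) * Complex.exp (θ * I))⁻¹) / 2
      = ⟨(r + r⁻¹) / 2 * Real.cos θ, (r - r⁻¹) / 2 * Real.sin θ⟩ := by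
    have he : Complex.exp (θ * I) = ⟨Real.cos θ, Real.sin θ⟩ := by
      rw [Complex.exp_mul_I]
      apply Complex.ext <;>
        simp [Complex.cos_ofReal_re, Complex.sin_ofReal_re]
    have he' : ((r : ℂ) * Complex.exp (θ * I))⁻¹ = (r⁻¹ : ℝ) * Complex.exp (-θ * I) := by
      rw [mul_inv, ← Complex.exp_neg]
      push_cast
      ring_nf
    rw [he']
    have he2 : Complex.exp (-θ * I) = ⟨Real.cos θ, -Real.sin θ⟩ := by
      rw [Complex.exp_mul_I]
      apply Complex.ext <;>
        push_cast <;>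
        simp [Complex.cos_ofReal_re, Complex.sin_ofReal_re]
    rw [he, he2]
    apply Complex.ext <;> simp <;> ring
  rw [hz]
  show ((r + r⁻¹) / 2 * Real.cos θ) ^ 2 / _ + ((r - r⁻¹) / 2 * Real.sin θ) ^ 2 / _ ≤ 1
  have hcs : Real.cos θ ^ 2 + Real.sin θ ^ 2 = 1 := Real.cos_sq_add_sin_sq θ
  have ha : (0:ℝ) < (χ ^ 2 + 1) / (2 * χ) := by positivity
  have hb : (0:ℝ) < (χ ^ 2 - 1) / (2 * χ) := by
    apply div_pos (by nlinarith) (by positivity)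
  have hA : ((r + r⁻¹) / 2) ^ 2 ≤ ((χ ^ 2 + 1) / (2 * χ)) ^ 2 := by
    have h3 : r + r⁻¹ ≤ χ + χ⁻¹ := by
      have key : (0:ℝ) ≤ (χ - r) * (r * χ - 1) :=
        mul_nonneg (by linarith) (by nlinarith)
      have heq : r + r⁻¹ - (χ + χ⁻¹) = -((χ - r) * (r * χ - 1)) / (r * χ) := by
        field_simp
        ring
      have hle : -((χ - r) * (r * χ - 1)) / (r * χ) ≤ 0 :=
        div_nonpos_of_nonpos_of_nonneg (by linarith) (by positivity)
      linarith [heq ▸ hle]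
    have h4 : (0:ℝ) < r + r⁻¹ := by positivity
    have : (χ ^ 2 + 1) / (2 * χ) = (χ + χ⁻¹) / 2 := by field_simp
    rw [this]
    gcongr
  have hB : ((r - r⁻¹) / 2) ^ 2 ≤ ((χ ^ 2 - 1) / (2 * χ)) ^ 2 := by
    have h3 : r - r⁻¹ ≤ χ - χ⁻¹ := by
      have key : (0:ℝ) ≤ (χ - r) * (r * χ + 1) :=
        mul_nonneg (by linarith) (by nlinarith)
      have heq : r - r⁻¹ - (χ - χ⁻¹) = -((χ - r) * (r * χ + 1)) / (r * χ) := by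
        field_simp
        ring
      have hle : -((χ - r) * (r * χ + 1)) / (r * χ) ≤ 0 :=
        div_nonpos_of_nonpos_of_nonneg (by linarith) (by positivity)
      linarith [heq ▸ hle]
    have h4 : (0:ℝ) ≤ r - r⁻¹ := by
      have : r⁻¹ ≤ 1 := by
        rw [inv_le_one_iff₀]; right; exact h1
      linarith
    have : (χ ^ 2 - 1) / (2 * χ) = (χ - χ⁻¹) / 2 := by field_simp
    rw [this]
    gcongr
  have e1 : ((r + r⁻¹) / 2 * Real.cos θ) ^ 2 / ((χ ^ 2 + 1) / (2 * χ)) ^ 2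
      = Real.cos θ ^ 2 * (((r + r⁻¹) / 2) ^ 2 / ((χ ^ 2 + 1) / (2 * χ)) ^ 2) := by ring
  have e2 : ((r - r⁻¹) / 2 * Real.sin θ) ^ 2 / ((χ ^ 2 - 1) / (2 * χ)) ^ 2
      = Real.sin θ ^ 2 * (((r - r⁻¹) / 2) ^ 2 / ((χ ^ 2 - 1) / (2 * χ)) ^ 2) := by ring
  rw [e1, e2]
  have d1 : ((r + r⁻¹) / 2) ^ 2 / ((χ ^ 2 + 1) / (2 * χ)) ^ 2 ≤ 1 :=
    (div_le_one (by positivity)).mpr hA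
  have d2 : ((r - r⁻¹) / 2) ^ 2 / ((χ ^ 2 - 1) / (2 * χ)) ^ 2 ≤ 1 :=
    (div_le_one (by positivity)).mpr hB
  nlinarith [sq_nonneg (Real.cos θ), sq_nonneg (Real.sin θ)]

lemma degree_T_le (n : ℕ) : (Polynomial.Chebyshev.T ℝ (n : ℤ)).degree ≤ (n : WithBot ℕ) := by
  induction n using Nat.twoStepInduction with
  | zero => simpa [Polynomial.Chebyshev.T_zero] using Polynomial.degree_one_le
  | one => simp [Polynomial.Chebyshev.T_one, Polynomial.degree_X_le]
  | more n ih1 ih2 =>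
    have : ((n : ℤ) + 2) = (((n + 2 : ℕ)) : ℤ) := by push_cast; ring
    rw [← this, Polynomial.Chebyshev.T_add_two]
    refine le_trans (Polynomial.degree_sub_le _ _) (max_le ?_ ?_)
    · refine le_trans (Polynomial.degree_mul_le _ _) ?_
      have h2x : (2 * Polynomial.X : Polynomial ℝ).degree ≤ 1 := by
        have h2 : (2 * Polynomial.X : Polynomial ℝ)
            = Polynomial.C 2 * Polynomial.X + Polynomial.C 0 := by simp [map_ofNat]
        rw [h2]; exact Polynomial.degree_linear_le
      calc (2 * Polynomial.X : Polynomial ℝ).degree + (Polynomial.Chebyshev.T ℝ ((n:ℤ) + 1)).degree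
          ≤ 1 + (n + 1 : ℕ) := by
            have : ((n : ℤ) + 1) = (((n + 1 : ℕ)) : ℤ) := by push_cast; ring
            rw [this]
            exact add_le_add h2x ih2
        _ ≤ ((n + 2 : ℕ) : WithBot ℕ) := by
            rw [show ((n + 2 : ℕ) : WithBot ℕ) = ((1 : ℕ) : WithBot ℕ) + ((n + 1 : ℕ) : WithBot ℕ) by
              rw [← Nat.cast_add]; norm_num; ring_nf]
            norm_num
    · exact le_trans ih1 (by exact_mod_cast WithBot.coe_le_coe.mpr (by omega))

lemma coeff_bound {G : ℂ → ℂ} {χ M : ℝ} (hχ : 1 < χ)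
    (hd : ∀ w : ℂ, 1 ≤ ‖w‖ → ‖w‖ ≤ χ → DifferentiableAt ℂ G w)
    (hb : ∀ w : ℂ, ‖w‖ = χ → ‖G w‖ ≤ M)
    (n : ℤ) :
    ‖(2 * π * I)⁻¹ * ∮ z in C(0, 1), z ^ (-n - 1) * G z‖ ≤ M * χ ^ (-n) := by
  have hχ0 : (0:ℝ) < χ := lt_trans one_pos hχ
  have hM0 : 0 ≤ M := le_trans (norm_nonneg _) (hb (χ : ℂ) (by simp [abs_of_nonneg hχ0.le]))
  have hmem : ∀ z : ℂ, z ∈ Metric.closedBall (0:ℂ) χ \ Metric.ball (0:ℂ) 1 →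
      1 ≤ ‖z‖ ∧ ‖z‖ ≤ χ := by
    intro z hz
    obtain ⟨h1, h2⟩ := hz
    rw [Metric.mem_closedBall, Complex.dist_eq, sub_zero] at h1
    rw [Metric.mem_ball, Complex.dist_eq, sub_zero] at h2
    exact ⟨not_lt.mp h2, h1⟩
  have hdall : ∀ z ∈ Metric.closedBall (0:ℂ) χ \ Metric.ball (0:ℂ) 1,
      DifferentiableAt ℂ (fun w : ℂ => w ^ (-n - 1) * G w) z := by
    intro z hz
    obtain ⟨h1, h2⟩ := hmem z hz
    have hz0 : z ≠ 0 := by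
      intro h; rw [h] at h1; simp at h1; linarith
    exact ((differentiableAt_zpow.mpr (Or.inl hz0))).mul (hd z h1 h2)
  have heq : (∮ z in C((0:ℂ), 1), z ^ (-n - 1) * G z)
      = ∮ z in C((0:ℂ), χ), z ^ (-n - 1) * G z := by
    symm
    apply circleIntegral_eq_of_differentiable_on_annulus_off_countable one_pos hχ.le
      Set.countable_empty
    · exact fun z hz => ((hdall z hz).continuousAt).continuousWithinAt
    · intro z hz
      exact hdall z ⟨(Metric.ball_subset_closedBall hz.1.1), fun h =>
        hz.1.2 (Metric.ball_subset_closedBall h)⟩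
  have hnorm : ‖∮ z in C((0:ℂ), χ), z ^ (-n - 1) * G z‖
      ≤ 2 * π * χ * (χ ^ (-n - 1) * M) := by
    apply circleIntegral.norm_integral_le_of_norm_le_const hχ0.le
    intro z hz
    rw [Metric.mem_sphere, Complex.dist_eq, sub_zero] at hz
    have : ‖z ^ (-n - 1) * G z‖ = ‖z‖ ^ (-n - 1) * ‖G z‖ := by
      simp [norm_mul, norm_zpow]
    rw [this, hz]
    have h1 : (0:ℝ) < χ ^ (-n - 1) := zpow_pos hχ0 _
    exact mul_le_mul_of_nonneg_left (hb z hz) h1.le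
  rw [heq, norm_mul]
  have habs : ‖(2 * (π:ℂ) * I)⁻¹‖ = (2 * π)⁻¹ := by
    rw [norm_inv]
    simp [_root_.abs_of_nonneg Real.pi_pos.le]
  rw [habs]
  calc (2 * π)⁻¹ * ‖∮ z in C((0:ℂ), χ), z ^ (-n - 1) * G z‖
      ≤ (2 * π)⁻¹ * (2 * π * χ * (χ ^ (-n - 1) * M)) := by
        apply mul_le_mul_of_nonneg_left hnorm
        positivity
    _ = M * (χ * χ ^ (-n - 1)) := by
        field_simp
    _ = M * χ ^ (-n) := by
        congr 1
        rw [show χ * χ ^ (-n-1) = χ ^ (1:ℤ) * χ ^ (-n-1) by rw [zpow_one],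
          ← zpow_add₀ (ne_of_gt hχ0)]
        congr 1
        ring

lemma circle_eq_fourier (G : ℂ → ℂ) (n : ℤ) :
    haveI : Fact (0 < 2 * π) := ⟨by positivity⟩
    (∮ z in C((0:ℂ), 1), z ^ (-n - 1) * G z)
      = (2 * ↑π * I) •
          fourierCoeff (fun θ : AddCircle (2 * π) => G (AddCircle.toCircle θ)) n := by
  haveI : Fact (0 < 2 * π) := ⟨by positivity⟩
  have hπ : (π : ℂ) ≠ 0 := Complex.ofReal_ne_zero.mpr Real.pi_ne_zero
  have hfour : ∀ t : ℝ, (fourier (-n) (t : AddCircle (2 * π)) : ℂ)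
      = Complex.exp (t * I) ^ (-n) := by
    intro t
    rw [fourier_coe_apply, ← Complex.exp_int_mul]
    congr 1
    push_cast
    field_simp
  have htoC : ∀ t : ℝ, (AddCircle.toCircle (t : AddCircle (2 * π)) : ℂ)
      = Complex.exp (t * I) := by
    intro t
    rw [AddCircle.toCircle_apply_mk,
      show 2 * π / (2 * π) = 1 from div_self (by positivity), one_mul, Circle.coe_exp]
  have hint : (∮ z in C((0:ℂ), 1), z ^ (-n - 1) * G z)
      = ∫ t in (0:ℝ)..2 * π, I * ((fourier (-n) (t : AddCircle (2 * π)) : ℂ)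
          * G (AddCircle.toCircle (t : AddCircle (2 * π)))) := by
    rw [circleIntegral]
    apply intervalIntegral.integral_congr
    intro t _
    dsimp only
    have hc : circleMap 0 1 t = Complex.exp (t * I) := by
      simp [circleMap]
    rw [deriv_circleMap, hc, smul_eq_mul, hfour t, htoC t]
    have hE : Complex.exp (↑t * I) ≠ 0 := Complex.exp_ne_zero _
    have hzp : Complex.exp (↑t * I) * Complex.exp (↑t * I) ^ (-n - 1)
        = Complex.exp (↑t * I) ^ (-n) := by
      rw [show (-n : ℤ) = (-n - 1) + 1 by ring, zpow_add_one₀ hE]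
      ring
    calc Complex.exp (↑t * I) * I * (Complex.exp (↑t * I) ^ (-n - 1) * G (Complex.exp (↑t * I)))
        = I * ((Complex.exp (↑t * I) * Complex.exp (↑t * I) ^ (-n - 1)) * G (Complex.exp (↑t * I))) := by ring
      _ = I * (Complex.exp (↑t * I) ^ (-n) * G (Complex.exp (↑t * I))) := by rw [hzp]
  rw [hint, intervalIntegral.integral_const_mul,
    fourierCoeff_eq_intervalIntegral _ n 0, zero_add]
  have : ∀ t : ℝ, (fourier (-n) (t : AddCircle (2 * π)) : ℂ)
      • G (AddCircle.toCircle (t : AddCircle (2 * π)))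
      = (fourier (-n) (t : AddCircle (2 * π)) : ℂ)
      * G (AddCircle.toCircle (t : AddCircle (2 * π))) := fun t => rfl
  simp only [this]
  rw [Complex.real_smul, smul_eq_mul, ← mul_assoc]
  congr 1
  push_cast
  field_simp

lemma fourier_symm (G : ℂ → ℂ) (hsym : ∀ w : ℂ, G w⁻¹ = G w) (n : ℤ) :
    haveI : Fact (0 < 2 * π) := ⟨by positivity⟩
    fourierCoeff (fun θ : AddCircle (2 * π) => G (AddCircle.toCircle θ)) (-n)
      = fourierCoeff (fun θ : AddCircle (2 * π) => G (AddCircle.toCircle θ)) n := by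
  haveI : Fact (0 < 2 * π) := ⟨by positivity⟩
  have hfour : ∀ m : ℤ, ∀ t : ℝ, (fourier (-m) (t : AddCircle (2 * π)) : ℂ)
      = Complex.exp (t * I) ^ (-m) := by
    intro m t
    rw [fourier_coe_apply, ← Complex.exp_int_mul]
    congr 1
    have hπ : (π : ℂ) ≠ 0 := Complex.ofReal_ne_zero.mpr Real.pi_ne_zero
    push_cast
    field_simp
  have htoC : ∀ t : ℝ, (AddCircle.toCircle (t : AddCircle (2 * π)) : ℂ)
      = Complex.exp (t * I) := by
    intro t
    rw [AddCircle.toCircle_apply_mk,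
      show 2 * π / (2 * π) = 1 from div_self (by positivity), one_mul, Circle.coe_exp]
  rw [fourierCoeff_eq_intervalIntegral _ (-n) (-π), fourierCoeff_eq_intervalIntegral _ n (-π)]
  congr 1
  have hend : -π + 2 * π = π := by ring
  rw [hend]
  have h1 : ∀ t : ℝ, (fourier (-(-n)) (t : AddCircle (2 * π)) : ℂ)
      • (fun θ : AddCircle (2 * π) => G (AddCircle.toCircle θ)) (t : AddCircle (2 * π))
      = (fun t : ℝ => Complex.exp (t * I) ^ (n : ℤ) * G (Complex.exp (t * I))) t := by
    intro t
    rw [smul_eq_mul, hfour (-n) t]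
    dsimp only
    rw [htoC t, neg_neg]
  have h2 : ∀ t : ℝ, (fourier (-n) (t : AddCircle (2 * π)) : ℂ)
      • (fun θ : AddCircle (2 * π) => G (AddCircle.toCircle θ)) (t : AddCircle (2 * π))
      = (fun t : ℝ => Complex.exp (t * I) ^ (n : ℤ) * G (Complex.exp (t * I))) (-t) := by
    intro t
    rw [smul_eq_mul, hfour n t]
    dsimp only
    rw [htoC t]
    have hE : Complex.exp (↑t * I) ≠ 0 := Complex.exp_ne_zero _
    have hneg : Complex.exp ((-t : ℝ) * I) = (Complex.exp (↑t * I))⁻¹ := by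
      rw [← Complex.exp_neg]
      congr 1
      push_cast
      ring
    rw [hneg, inv_zpow, ← zpow_neg, hsym (Complex.exp (↑t * I))]
  calc (∫ t in (-π)..π, (fourier (-(-n)) (t : AddCircle (2 * π)) : ℂ)
        • (fun θ : AddCircle (2 * π) => G (AddCircle.toCircle θ)) (t : AddCircle (2 * π)))
      = ∫ t in (-π)..π, Complex.exp (t * I) ^ (n : ℤ) * G (Complex.exp (t * I)) := by
        apply intervalIntegral.integral_congr; intro t _; exact h1 t
    _ = ∫ t in (-π)..π, (fun t : ℝ => Complex.exp (t * I) ^ (n : ℤ) * G (Complex.exp (t * I))) (-t) := by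
        rw [intervalIntegral.integral_comp_neg
          (fun t : ℝ => Complex.exp (t * I) ^ (n : ℤ) * G (Complex.exp (t * I)))]
        rw [neg_neg]
    _ = ∫ t in (-π)..π, (fourier (-n) (t : AddCircle (2 * π)) : ℂ)
        • (fun θ : AddCircle (2 * π) => G (AddCircle.toCircle θ)) (t : AddCircle (2 * π)) := by
        apply intervalIntegral.integral_congr; intro t _; exact (h2 t).symm

/-- **Bernstein's theorem.** If `f` is analytic on a neighborhood of the closed Bernstein
ellipse `E_χ` (`χ > 1`), real valued on the reals, and `M(χ) = sup_{z ∈ E_χ} |f z|`, then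
for every `k` there is a real polynomial `p` of degree at most `k` with
`max_{x ∈ [-1,1]} |f(x) - p(x)| ≤ 2 M(χ) / (χ^k (χ - 1))`; in particular the best
approximation error `E_k(f)` satisfies this bound. -/
theorem bernstein_theorem
    (χ : ℝ) (hχ : 1 < χ) (f : ℂ → ℂ)
    (hf : ∃ U : Set ℂ, IsOpen U ∧ bernsteinEllipse χ ⊆ U ∧ AnalyticOn ℂ f U)
    (hreal : ∀ x : ℝ, (f x).im = 0)
    (Mχ : ℝ) (hM : Mχ = sSup ((fun z => ‖f z‖) '' bernsteinEllipse χ))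
    (k : ℕ) :
    ∃ p : Polynomial ℝ, p.degree ≤ k ∧
      ∀ x ∈ Icc (-1 : ℝ) 1, |(f x).re - p.eval x| ≤ 2 * Mχ / (χ ^ k * (χ - 1)) := by
  haveI : Fact (0 < 2 * π) := ⟨by positivity⟩
  obtain ⟨U, hUo, hUe, hfa⟩ := hf
  have hχ0 : (0 : ℝ) < χ := lt_trans one_pos hχ
  have hainv : χ⁻¹ < 1 := inv_lt_one_of_one_lt₀ hχ
  have hainv0 : (0:ℝ) ≤ χ⁻¹ := by positivity
  -- the ellipse is compact
  have ha0 : (0:ℝ) < (χ ^ 2 + 1) / (2 * χ) := by positivity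
  have hb0 : (0:ℝ) < (χ ^ 2 - 1) / (2 * χ) := div_pos (by nlinarith) (by positivity)
  have hcomp : IsCompact (bernsteinEllipse χ) := by
    apply Metric.isCompact_of_isClosed_isBounded
    · have : bernsteinEllipse χ = (fun z : ℂ => z.re ^ 2 / ((χ ^ 2 + 1) / (2 * χ)) ^ 2 +
          z.im ^ 2 / ((χ ^ 2 - 1) / (2 * χ)) ^ 2) ⁻¹' (Iic 1) := rfl
      rw [this]
      exact IsClosed.preimage (((Complex.continuous_re.pow 2).div_const _).add
        ((Complex.continuous_im.pow 2).div_const _)) isClosed_Iic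
    · apply (Metric.isBounded_closedBall
        (x := (0:ℂ)) (r := (χ ^ 2 + 1) / (2 * χ) + (χ ^ 2 - 1) / (2 * χ))).subset
      intro z hz
      have h1 : z.re ^ 2 / ((χ ^ 2 + 1) / (2 * χ)) ^ 2 +
          z.im ^ 2 / ((χ ^ 2 - 1) / (2 * χ)) ^ 2 ≤ 1 := hz
      have h2 : (0:ℝ) ≤ z.im ^ 2 / ((χ ^ 2 - 1) / (2 * χ)) ^ 2 := by positivity
      have h3 : (0:ℝ) ≤ z.re ^ 2 / ((χ ^ 2 + 1) / (2 * χ)) ^ 2 := by positivity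
      have hre : |z.re| ≤ (χ ^ 2 + 1) / (2 * χ) := by
        have : z.re ^ 2 ≤ ((χ ^ 2 + 1) / (2 * χ)) ^ 2 := by
          rw [← div_le_one (by positivity : (0:ℝ) < ((χ ^ 2 + 1) / (2 * χ)) ^ 2)]
          linarith
        nlinarith [_root_.sq_abs z.re, abs_nonneg z.re]
      have him : |z.im| ≤ (χ ^ 2 - 1) / (2 * χ) := by
        have : z.im ^ 2 ≤ ((χ ^ 2 - 1) / (2 * χ)) ^ 2 := by
          rw [← div_le_one (by positivity : (0:ℝ) < ((χ ^ 2 - 1) / (2 * χ)) ^ 2)]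
          linarith
        nlinarith [_root_.sq_abs z.im, abs_nonneg z.im]
      rw [Metric.mem_closedBall, Complex.dist_eq, sub_zero]
      calc ‖z‖ ≤ |z.re| + |z.im| := Complex.norm_le_abs_re_add_abs_im z
        _ ≤ (χ ^ 2 + 1) / (2 * χ) + (χ ^ 2 - 1) / (2 * χ) := add_le_add hre him
  -- the sup bound
  have hMb : ∀ z ∈ bernsteinEllipse χ, ‖f z‖ ≤ Mχ := by
    intro z hz
    rw [hM]
    exact le_csSup (hcomp.bddAbove_image
      (continuous_norm.comp_continuousOn (hfa.continuousOn.mono hUe)))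
      (mem_image_of_mem _ hz)
  have hzero_mem : (0:ℂ) ∈ bernsteinEllipse χ := by
    show (0:ℂ).re ^ 2 / _ + (0:ℂ).im ^ 2 / _ ≤ 1
    norm_num
  have hM0 : 0 ≤ Mχ := le_trans (norm_nonneg _) (hMb 0 hzero_mem)
  -- the transplanted function G
  set G : ℂ → ℂ := fun w => f ((w + w⁻¹) / 2) with hGdef
  have hGsym : ∀ w : ℂ, G w⁻¹ = G w := by
    intro w
    simp only [hGdef]
    rw [inv_inv, add_comm]
  have hGd : ∀ w : ℂ, 1 ≤ ‖w‖ → ‖w‖ ≤ χ → DifferentiableAt ℂ G w := by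
    intro w h1 h2
    have hw0 : w ≠ 0 := by
      intro h
      rw [h] at h1
      simp at h1
      linarith
    have hmem : (w + w⁻¹) / 2 ∈ bernsteinEllipse χ := by
      have := mem_bernstein (Complex.arg w) hχ h1 h2
      rwa [Complex.norm_mul_exp_arg_mul_I w] at this
    have hfd : DifferentiableAt ℂ f ((w + w⁻¹) / 2) :=
      (hfa.differentiableOn.differentiableAt (hUo.mem_nhds (hUe hmem)))
    have hψ : DifferentiableAt ℂ (fun z : ℂ => (z + z⁻¹) / 2) w :=
      (differentiableAt_id.add (differentiableAt_inv hw0)).div_const 2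
    exact hfd.comp w hψ
  -- Φ and its Fourier coefficients
  have hcont : Continuous (fun θ : AddCircle (2 * π) => G (AddCircle.toCircle θ)) := by
    rw [continuous_iff_continuousAt]
    intro θ
    have h1 : ‖(AddCircle.toCircle θ : ℂ)‖ = 1 := Circle.norm_coe _
    have hinner : Continuous (fun θ : AddCircle (2 * π) => (AddCircle.toCircle θ : ℂ)) :=
      continuous_induced_dom.comp AddCircle.continuous_toCircle
    show ContinuousAt (G ∘ fun θ : AddCircle (2 * π) => (AddCircle.toCircle θ : ℂ)) θ
    exact ContinuousAt.comp
      (hGd _ (le_of_eq h1.symm) (by rw [h1]; linarith)).continuousAt hinner.continuousAt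
  set Φ : C(AddCircle (2 * π), ℂ) := ⟨fun θ => G (AddCircle.toCircle θ), hcont⟩ with hΦdef
  set c : ℤ → ℂ := fourierCoeff ⇑Φ with hcdef
  have hceq : c = fourierCoeff (fun θ : AddCircle (2 * π) => G (AddCircle.toCircle θ)) := rfl
  -- coefficient bound
  have h2πI : (2 * (π:ℂ) * I) ≠ 0 := by
    simp [Real.pi_ne_zero, Complex.ofReal_ne_zero, I_ne_zero]
  have hkey : ∀ n : ℤ, ‖c n‖ ≤ Mχ * χ ^ (-n) := by
    intro n
    have h1 : (∮ z in C((0:ℂ), 1), z ^ (-n - 1) * G z) = (2 * ↑π * I) • c n := by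
      rw [hceq]; exact circle_eq_fourier G n
    have h2 : c n = (2 * ↑π * I)⁻¹ * ∮ z in C((0:ℂ), 1), z ^ (-n - 1) * G z := by
      rw [h1, smul_eq_mul, inv_mul_cancel_left₀ h2πI]
    rw [h2]
    apply coeff_bound hχ hGd
    intro w hw
    apply hMb
    have h3 : w ≠ 0 := by
      intro h
      rw [h] at hw
      simp at hw
      linarith
    have := mem_bernstein (Complex.arg w) hχ (by rw [hw]; linarith : 1 ≤ ‖w‖)
      (le_of_eq hw)
    rwa [Complex.norm_mul_exp_arg_mul_I w] at this
  -- symmetry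
  have hsymm : ∀ n : ℤ, c (-n) = c n := by
    intro n
    rw [hceq]
    exact fourier_symm G hGsym n
  -- bound for all n via natAbs
  have hkey' : ∀ n : ℤ, ‖c n‖ ≤ Mχ * χ⁻¹ ^ n.natAbs := by
    intro n
    have hzp : ∀ m : ℕ, χ ^ (-(m:ℤ)) = χ⁻¹ ^ m := by
      intro m
      rw [zpow_neg, ← inv_zpow, zpow_natCast]
    rcases le_or_gt 0 n with hn | hn
    · obtain ⟨m, rfl⟩ : ∃ m : ℕ, n = (m : ℤ) := ⟨n.natAbs, by omega⟩
      rw [Int.natAbs_natCast, ← hzp m]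
      exact hkey m
    · obtain ⟨m, rfl⟩ : ∃ m : ℕ, n = -(m : ℤ) := ⟨n.natAbs, by omega⟩
      rw [hsymm (m : ℤ)]
      rw [show ((-(m:ℤ)).natAbs) = m by omega, ← hzp m]
      exact hkey m
  -- summability of the Fourier coefficients
  have hbound_sum : Summable (fun n : ℤ => Mχ * χ⁻¹ ^ n.natAbs) := by
    apply Summable.of_nat_of_neg_add_one
    · apply Summable.congr ((summable_geometric_of_lt_one hainv0 hainv).mul_left Mχ)
      intro m
      simp [Int.natAbs_natCast]
    · apply Summable.congr (((summable_geometric_of_lt_one hainv0 hainv).mul_left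
        (Mχ * χ⁻¹)))
      intro m
      have : ((-(↑m + 1) : ℤ)).natAbs = m + 1 := by omega
      rw [this, pow_succ]
      ring
  have hsum : Summable (fourierCoeff ⇑Φ) := by
    apply Summable.of_norm
    apply Summable.of_nonneg_of_le (fun n => norm_nonneg _) (fun n => ?_) hbound_sum
    exact hkey' n
  -- the approximating polynomial
  refine ⟨Polynomial.C ((c 0).re) + ∑ m ∈ Finset.range k,
      Polynomial.C (2 * (c ((m : ℤ) + 1)).re) * Polynomial.Chebyshev.T ℝ ((m : ℤ) + 1),
    ?_, ?_⟩
  · -- degree bound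
    refine le_trans (Polynomial.degree_add_le _ _) (max_le ?_ ?_)
    · exact le_trans Polynomial.degree_C_le (by exact_mod_cast Nat.zero_le k)
    · refine le_trans (Polynomial.degree_sum_le _ _) (Finset.sup_le fun m hm => ?_)
      have hmk : m + 1 ≤ k := Nat.succ_le_of_lt (Finset.mem_range.mp hm)
      calc (Polynomial.C (2 * (c ((m : ℤ) + 1)).re)
              * Polynomial.Chebyshev.T ℝ ((m : ℤ) + 1)).degree
          ≤ (Polynomial.C (2 * (c ((m : ℤ) + 1)).re)).degree
              + (Polynomial.Chebyshev.T ℝ ((m : ℤ) + 1)).degree :=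
            Polynomial.degree_mul_le _ _
        _ ≤ 0 + ((m + 1 : ℕ) : WithBot ℕ) := by
            refine add_le_add Polynomial.degree_C_le ?_
            rw [show ((m : ℤ) + 1) = ((m + 1 : ℕ) : ℤ) by push_cast; ring]
            exact degree_T_le (m + 1)
        _ ≤ (k : WithBot ℕ) := by
            rw [zero_add]
            exact_mod_cast hmk
  · -- the approximation bound
    intro x hx
    obtain ⟨hx1, hx2⟩ := hx
    set θ : ℝ := Real.arccos x with hθdef
    have hcos : Real.cos θ = x := Real.cos_arccos hx1 hx2
    have hΦθ : Φ ((θ : ℝ) : AddCircle (2 * π)) = f ↑x := by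
      show G (AddCircle.toCircle ((θ : ℝ) : AddCircle (2 * π)) : ℂ) = f ↑x
      rw [toCircle_eq θ]
      show f ((Complex.exp (↑θ * I) + (Complex.exp (↑θ * I))⁻¹) / 2) = f ↑x
      rw [← Complex.exp_neg]
      have h2c : Complex.exp (↑θ * I) + Complex.exp (-(↑θ * I)) = 2 * Complex.cos ↑θ := by
        rw [Complex.two_cos]
        ring_nf
      rw [h2c, ← Complex.ofReal_cos, hcos]
      norm_num
    have hps := has_pointwise_sum_fourier_series_of_summable hsum ((θ : ℝ) : AddCircle (2 * π))
    rw [show Φ ((θ : ℝ) : AddCircle (2 * π)) = f ↑x from hΦθ] at hps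
    have hre : HasSum (fun i : ℤ =>
        (fourierCoeff (⇑Φ) i • (fourier i ((θ : ℝ) : AddCircle (2 * π)) : ℂ)).re)
        ((f ↑x).re) := Complex.hasSum_re hps
    set g : ℤ → ℝ :=
      fun i => (c i • (fourier i ((θ : ℝ) : AddCircle (2 * π)) : ℂ)).re with hgdef
    have hre' : HasSum g ((f ↑x).re) := hre
    have hw : HasSum (fun m : ℕ => g m + g (-(m : ℤ))) ((f ↑x).re + g 0) := hre'.nat_add_neg
    have hgb : ∀ i : ℤ, |g i| ≤ Mχ * χ⁻¹ ^ i.natAbs := by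
      intro i
      calc |g i| ≤ ‖c i • (fourier i ((θ : ℝ) : AddCircle (2 * π)) : ℂ)‖ :=
            Complex.abs_re_le_norm _
        _ = ‖c i‖ * ‖(fourier i ((θ : ℝ) : AddCircle (2 * π)) : ℂ)‖ := by
            rw [smul_eq_mul, norm_mul]
        _ = ‖c i‖ := by
            rw [_root_.fourier_eq i θ, norm_zpow, Complex.norm_exp_ofReal_mul_I, one_zpow, mul_one]
        _ ≤ Mχ * χ⁻¹ ^ i.natAbs := hkey' i
    have hgpair : ∀ m : ℕ, g (m : ℤ) + g (-(m : ℤ)) = 2 * (c (m : ℤ)).re * Real.cos (m * θ) := by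
      intro m
      have hfsum : (fourier (m : ℤ) ((θ : ℝ) : AddCircle (2 * π)) : ℂ)
          + (fourier (-(m : ℤ)) ((θ : ℝ) : AddCircle (2 * π)) : ℂ)
          = ((2 * Real.cos (m * θ) : ℝ) : ℂ) := by
        rw [_root_.fourier_eq, _root_.fourier_eq, ← Complex.exp_int_mul, ← Complex.exp_int_mul]
        have e1 : ((m : ℤ) : ℂ) * (↑θ * I) = ((m * θ : ℝ) : ℂ) * I := by push_cast; ring
        have e2 : ((-(m : ℤ) : ℤ) : ℂ) * (↑θ * I) = -((m * θ : ℝ) : ℂ) * I := by push_cast; ring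
        rw [e1, e2, ← Complex.two_cos, ← Complex.ofReal_cos]
        push_cast
        ring
      have : g (m : ℤ) + g (-(m : ℤ))
          = (c (m : ℤ) * ((fourier (m : ℤ) ((θ : ℝ) : AddCircle (2 * π)) : ℂ)
              + (fourier (-(m : ℤ)) ((θ : ℝ) : AddCircle (2 * π)) : ℂ))).re := by
        simp only [hgdef, smul_eq_mul, mul_add, Complex.add_re, hsymm (m : ℤ)]
      rw [this, hfsum, mul_comm, Complex.re_ofReal_mul]
      ring
    have hrange : ∑ m ∈ Finset.range (k + 1), (g (m : ℤ) + g (-(m : ℤ)))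
        = Polynomial.eval x (Polynomial.C ((c 0).re) + ∑ m ∈ Finset.range k,
            Polynomial.C (2 * (c ((m : ℤ) + 1)).re) * Polynomial.Chebyshev.T ℝ ((m : ℤ) + 1))
          + g 0 := by
      rw [Finset.sum_range_succ']
      rw [Polynomial.eval_add, Polynomial.eval_C, Polynomial.eval_finset_sum]
      have hterm : ∀ m ∈ Finset.range k,
          Polynomial.eval x (Polynomial.C (2 * (c ((m : ℤ) + 1)).re)
            * Polynomial.Chebyshev.T ℝ ((m : ℤ) + 1))
          = g ((m + 1 : ℕ) : ℤ) + g (-((m + 1 : ℕ) : ℤ)) := by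
        intro m _
        rw [Polynomial.eval_mul, Polynomial.eval_C, ← hcos,
          Polynomial.Chebyshev.T_real_cos θ ((m : ℤ) + 1)]
        rw [hgpair (m + 1)]
        push_cast
        ring
      rw [Finset.sum_congr rfl hterm]
      have hg0 : g ((0 : ℕ) : ℤ) = (c 0).re := by
        have : ((fourier (((0:ℕ):ℤ)) ((θ : ℝ) : AddCircle (2 * π))) : ℂ) = 1 := by
          norm_num [_root_.fourier_eq]
        simp only [hgdef, this, smul_eq_mul, mul_one]
        norm_num
      have hgneg0 : g (-((0 : ℕ) : ℤ)) = g ((0:ℕ) : ℤ) := by norm_num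
      rw [hgneg0, hg0]
      have hg0' : g 0 = (c 0).re := by rw [← hg0]; norm_num
      rw [hg0']
      ring
    -- tail bound
    have hsum_w : Summable (fun m : ℕ => g (m : ℤ) + g (-(m : ℤ))) := hw.summable
    have htail := Summable.sum_add_tsum_nat_add (f := fun m : ℕ => g (m : ℤ) + g (-(m : ℤ)))
      (k + 1) hsum_w
    rw [hw.tsum_eq, hrange] at htail
    have hdiff : (f ↑x).re - Polynomial.eval x (Polynomial.C ((c 0).re)
        + ∑ m ∈ Finset.range k, Polynomial.C (2 * (c ((m : ℤ) + 1)).re)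
          * Polynomial.Chebyshev.T ℝ ((m : ℤ) + 1))
        = ∑' i : ℕ, (g ((i + (k + 1) : ℕ) : ℤ) + g (-((i + (k + 1) : ℕ) : ℤ))) := by
      linarith [htail]
    rw [hdiff]
    have hwb : ∀ m : ℕ, |g (m : ℤ) + g (-(m : ℤ))| ≤ 2 * Mχ * χ⁻¹ ^ m := by
      intro m
      calc |g (m : ℤ) + g (-(m : ℤ))| ≤ |g (m : ℤ)| + |g (-(m : ℤ))| := abs_add_le _ _
        _ ≤ Mχ * χ⁻¹ ^ m + Mχ * χ⁻¹ ^ m := by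
            refine add_le_add ?_ ?_
            · simpa using hgb (m : ℤ)
            · have := hgb (-(m : ℤ))
              simpa using this
        _ = 2 * Mχ * χ⁻¹ ^ m := by ring
    have hgeo' : Summable (fun i : ℕ => 2 * Mχ * χ⁻¹ ^ (k + 1) * χ⁻¹ ^ i) :=
      (summable_geometric_of_lt_one hainv0 hainv).mul_left _
    have hble : ∀ i : ℕ, |g ((i + (k + 1) : ℕ) : ℤ) + g (-((i + (k + 1) : ℕ) : ℤ))|
        ≤ 2 * Mχ * χ⁻¹ ^ (k + 1) * χ⁻¹ ^ i := by
      intro i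
      refine le_trans (hwb (i + (k + 1))) (le_of_eq ?_)
      rw [pow_add]
      ring
    have habs_sum : Summable (fun i : ℕ =>
        |g ((i + (k + 1) : ℕ) : ℤ) + g (-((i + (k + 1) : ℕ) : ℤ))|) :=
      Summable.of_nonneg_of_le (fun _ => abs_nonneg _) hble hgeo'
    calc |∑' i : ℕ, (g ((i + (k + 1) : ℕ) : ℤ) + g (-((i + (k + 1) : ℕ) : ℤ)))|
        ≤ ∑' i : ℕ, |g ((i + (k + 1) : ℕ) : ℤ) + g (-((i + (k + 1) : ℕ) : ℤ))| := by
          rw [← Real.norm_eq_abs]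
          refine le_trans (norm_tsum_le_tsum_norm ?_) (le_of_eq ?_)
          · simpa [Real.norm_eq_abs] using habs_sum
          · simp [Real.norm_eq_abs]
      _ ≤ ∑' i : ℕ, 2 * Mχ * χ⁻¹ ^ (k + 1) * χ⁻¹ ^ i :=
          Summable.tsum_le_tsum hble habs_sum hgeo'
      _ = 2 * Mχ * χ⁻¹ ^ (k + 1) * (1 - χ⁻¹)⁻¹ := by
          rw [tsum_mul_left, tsum_geometric_of_lt_one hainv0 hainv]
      _ = 2 * Mχ / (χ ^ k * (χ - 1)) := by
          have hχ1 : χ - 1 ≠ 0 := by linarith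
          have hχn : χ ≠ 0 := ne_of_gt hχ0
          have h1χ : 1 - χ⁻¹ ≠ 0 := by
            have : χ⁻¹ < 1 := hainv
            linarith
          rw [inv_pow]
          field_simp
          ring
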